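/- Let X be an object of a Krull-Schmidt category and suppose there are two direct sum decompositions X_1 ⊕ … ⊕ X_n = X = X' ⊕ X'' such that each X_i is indecomposable. Then there exists an integer t ≤ n and a reindexing of the X_i such that X = X_1 ⊕ … ⊕ X_t ⊕ X'; equivalently, there is a subset I of {1, …, n} with X ≅ (⨁_{i ∈ I} X_i) ⊕ X', the summand ⨁_{i ∈ I} X_i being isomorphic to X''. -/

import Mathlib

open CategoryTheory CategoryTheory.Limits

attribute [local instance] CategoryTheory.Limits.hasBinaryBiproducts_of_finite_biproducts

universe v u

/-- An additive category is a *Krull-Schmidt category* if every object decomposes into a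
finite direct sum of objects having local endomorphism rings. -/
def IsKrullSchmidtCategory (A : Type u) [Category.{v} A] [Preadditive A]
    [HasFiniteBiproducts A] : Prop :=
  ∀ X : A, ∃ (n : ℕ) (f : Fin n → A),
    Nonempty (X ≅ ⨁ f) ∧ ∀ i, IsLocalRing (End (f i))

section RingLemmas
variable {R : Type*} [Ring R] [IsLocalRing R]

lemma KS.isUnit_or {a b : R} (h : IsUnit (a + b)) : IsUnit a ∨ IsUnit b := by
  obtain ⟨u, hu⟩ := h
  have h1 : ↑u⁻¹ * a + ↑u⁻¹ * b = 1 := by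
    rw [← mul_add, ← hu, Units.inv_mul]
  rcases IsLocalRing.isUnit_or_isUnit_of_add_one h1 with h' | h'
  · left
    have h2 := (Units.isUnit u).mul h'
    rwa [← mul_assoc, Units.mul_inv, one_mul] at h2
  · right
    have h2 := (Units.isUnit u).mul h'
    rwa [← mul_assoc, Units.mul_inv, one_mul] at h2

lemma KS.idem_zero_or_one {e : R} (he : e * e = e) : e = 0 ∨ e = 1 := by
  rcases KS.isUnit_or (a := e) (b := 1 - e) (by simpa using isUnit_one) with hu | hu
  · right
    exact hu.mul_left_cancel (by rw [he, mul_one])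
  · left
    have h2 : (1 - e) * (1 - e) = (1 - e) * 1 := by
      rw [mul_one, mul_sub, sub_mul, sub_mul, one_mul, mul_one, he]
      simp
    have h3 := hu.mul_left_cancel h2
    have h4 : (1 : R) - e = 1 - 0 := by simpa using h3
    simpa using sub_right_injective h4

lemma KS.isUnit_left_of_mul {x y : R} (h : IsUnit (x * y)) : IsUnit x := by
  obtain ⟨u, hu⟩ := h
  have h1 : x * (y * ↑u⁻¹) = 1 := by
    rw [← mul_assoc, ← hu, Units.mul_inv]
  set r := y * ↑u⁻¹ with hr
  have he : (r * x) * (r * x) = r * x := by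
    rw [mul_assoc r x (r * x), ← mul_assoc x r x, h1, one_mul]
  rcases KS.idem_zero_or_one he with h0 | hone
  · exfalso
    have hx : x = 0 := by
      have hxx : x * (r * x) = x := by rw [← mul_assoc, h1, one_mul]
      rw [h0, mul_zero] at hxx
      exact hxx.symm
    have : IsUnit (0 : R) := by rw [hx, zero_mul] at hu; exact ⟨u, hu⟩
    exact zero_ne_one (isUnit_zero_iff.mp this)
  · exact ⟨⟨x, r, h1, hone⟩, rfl⟩

lemma KS.isUnit_right_of_mul {x y : R} (h : IsUnit (x * y)) : IsUnit y := by
  obtain ⟨u, hu⟩ := h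
  have h1 : (↑u⁻¹ * x) * y = 1 := by
    rw [mul_assoc, ← hu, Units.inv_mul]
  set l := ↑u⁻¹ * x with hl
  have he : (y * l) * (y * l) = y * l := by
    rw [mul_assoc y l (y * l), ← mul_assoc l y l, h1, one_mul]
  rcases KS.idem_zero_or_one he with h0 | hone
  · exfalso
    have hy : y = 0 := by
      have hyy : (y * l) * y = y := by rw [mul_assoc, h1, mul_one]
      rw [h0, zero_mul] at hyy
      exact hyy.symm
    have : IsUnit (0 : R) := by rw [hy, mul_zero] at hu; exact ⟨u, hu⟩
    exact zero_ne_one (isUnit_zero_iff.mp this)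
  · exact ⟨⟨y, l, hone, h1⟩, rfl⟩

lemma KS.exists_isUnit_of_sum {ι : Type*} (s : Finset ι) (f : ι → R)
    (h : IsUnit (∑ i ∈ s, f i)) : ∃ i ∈ s, IsUnit (f i) := by
  classical
  induction s using Finset.induction_on with
  | empty =>
    exfalso
    rw [Finset.sum_empty] at h
    exact zero_ne_one (isUnit_zero_iff.mp h)
  | insert _ _ hns ih =>
    rename_i a t
    rw [Finset.sum_insert hns] at h
    rcases KS.isUnit_or h with hu | hu
    · exact ⟨a, Finset.mem_insert_self a t, hu⟩
    · obtain ⟨i, hi, hui⟩ := ih hu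
      exact ⟨i, Finset.mem_insert_of_mem hi, hui⟩

end RingLemmas

section CatLemmas
variable {A : Type u} [Category.{v} A] [Preadditive A]

/-- Transport of endomorphism rings along an isomorphism. -/
def KS.endRingEquiv {X Y : A} (α : X ≅ Y) : End X ≃+* End Y where
  toFun f := End.of (α.inv ≫ End.asHom f ≫ α.hom)
  invFun g := End.of (α.hom ≫ End.asHom g ≫ α.inv)
  left_inv f := by
    show (α.hom ≫ (α.inv ≫ f ≫ α.hom) ≫ α.inv : X ⟶ X) = f
    simp
  right_inv g := by
    show (α.inv ≫ (α.hom ≫ g ≫ α.inv) ≫ α.hom : Y ⟶ Y) = g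
    simp
  map_add' f g := by
    show (α.inv ≫ (f + g) ≫ α.hom : Y ⟶ Y)
      = (α.inv ≫ f ≫ α.hom : Y ⟶ Y) + (α.inv ≫ g ≫ α.hom : Y ⟶ Y)
    rw [Preadditive.add_comp, Preadditive.comp_add]
  map_mul' f g := by
    show (α.inv ≫ (g ≫ f) ≫ α.hom : Y ⟶ Y)
      = (α.inv ≫ g ≫ α.hom) ≫ (α.inv ≫ f ≫ α.hom)
    simp

lemma KS.isLocalRing_transfer {R S : Type*} [Ring R] [Ring S] (e : R ≃+* S)
    (h : IsLocalRing R) : IsLocalRing S := by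
  haveI := h
  haveI : Nontrivial S := e.symm.toEquiv.nontrivial
  refine ⟨fun {a b} hab => ?_⟩
  have h1 : e.symm a + e.symm b = 1 := by
    rw [← map_add, hab, map_one]
  rcases IsLocalRing.isUnit_or_isUnit_of_add_one h1 with h' | h'
  · left; simpa using h'.map e
  · right; simpa using h'.map e

lemma KS.not_isZero_of_local {N : A} (h : IsLocalRing (End N)) : ¬ IsZero N := by
  intro hz
  haveI := h
  exact one_ne_zero (α := End N) (hz.eq_of_src (𝟙 N) 0)

lemma KS.isZero_of_retract {M N : A} (hM : IsZero M) (i : N ⟶ M) (p : M ⟶ N)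
    (h : i ≫ p = 𝟙 N) : IsZero N := by
  rw [IsZero.iff_id_eq_zero, ← h, hM.eq_of_tgt i 0, zero_comp]

lemma KS.isIso_of_comp_isUnit {Z Y : A} (hZ : IsLocalRing (End Z)) (hY : IsLocalRing (End Y))
    (f : Z ⟶ Y) (g : Y ⟶ Z) (h : IsUnit (End.of (f ≫ g))) : IsIso f := by
  haveI := hZ; haveI := hY
  obtain ⟨u, hu⟩ := h
  set v : Z ⟶ Z := End.asHom (↑u⁻¹ : End Z) with hvdef
  have hv1 : (f ≫ g) ≫ v = 𝟙 Z := by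
    show ((↑u⁻¹ : End Z) * End.of (f ≫ g) : End Z) = 1
    rw [← hu, Units.inv_mul]
  set k : Y ⟶ Z := g ≫ v with hkdef
  have hk : f ≫ k = 𝟙 Z := by
    rw [hkdef, ← Category.assoc]
    exact hv1
  have he : (End.of (k ≫ f)) * (End.of (k ≫ f)) = End.of (k ≫ f) := by
    show (k ≫ f) ≫ (k ≫ f) = k ≫ f
    calc (k ≫ f) ≫ (k ≫ f) = k ≫ (f ≫ k) ≫ f := by simp only [Category.assoc]
    _ = k ≫ f := by rw [hk, Category.id_comp]
  rcases KS.idem_zero_or_one he with h0 | h1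
  · exfalso
    have hzero : 𝟙 Z = 0 := by
      have h2 : f ≫ (k ≫ f) ≫ k = 𝟙 Z := by
        calc f ≫ (k ≫ f) ≫ k = (f ≫ k) ≫ (f ≫ k) := by simp only [Category.assoc]
        _ = 𝟙 Z := by rw [hk, Category.id_comp]
      rw [← h2, show (k ≫ f : Y ⟶ Y) = 0 from h0, zero_comp, comp_zero]
    exact one_ne_zero (α := End Z) hzero
  · exact ⟨k, hk, h1⟩

variable [HasFiniteBiproducts A]

attribute [local instance] CategoryTheory.Limits.hasBinaryBiproducts_of_finite_biproducts

lemma KS.cancel {Z C D : A} (hZ : IsLocalRing (End Z)) (φ : Z ⊞ C ≅ Z ⊞ D) :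
    Nonempty (C ≅ D) := by
  haveI := hZ
  set a : Z ⟶ Z := biprod.inl ≫ φ.hom ≫ biprod.fst with ha
  set c : Z ⟶ D := biprod.inl ≫ φ.hom ≫ biprod.snd with hc
  set a' : Z ⟶ Z := biprod.inl ≫ φ.inv ≫ biprod.fst with ha'
  set b' : D ⟶ Z := biprod.inr ≫ φ.inv ≫ biprod.fst with hb'
  have key : a ≫ a' + c ≫ b' = 𝟙 Z := by
    have expand : a ≫ a' + c ≫ b'
        = biprod.inl ≫ φ.hom ≫ (biprod.fst ≫ biprod.inl + biprod.snd ≫ biprod.inr) ≫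
            φ.inv ≫ biprod.fst := by
      simp only [ha, hc, ha', hb', Preadditive.comp_add, Preadditive.add_comp,
        Category.assoc]
    rw [expand, biprod.total]
    simp
  have hor : IsUnit (End.of (a ≫ a')) ∨ IsUnit (End.of (c ≫ b')) := by
    apply KS.isUnit_or
    show IsUnit (End.of ((a ≫ a') + (c ≫ b')))
    rw [show ((a ≫ a') + (c ≫ b') : Z ⟶ Z) = 𝟙 Z from key]
    exact isUnit_one
  rcases hor with hu | hu
  · have hua : IsUnit (End.of a) := by
      have h2 : End.of (a ≫ a') = End.of a' * End.of a := rfl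
      rw [h2] at hu
      exact KS.isUnit_right_of_mul hu
    haveI : IsIso (biprod.inl ≫ φ.hom ≫ biprod.fst) := by
      rw [← ha]
      exact (isUnit_iff_isIso (End.of a)).mp hua
    exact ⟨Biprod.isoElim φ⟩
  · obtain ⟨u, hu'⟩ := hu
    set v : Z ⟶ Z := End.asHom (↑u⁻¹ : End Z) with hv
    have hv1 : (c ≫ b') ≫ v = 𝟙 Z := by
      show ((↑u⁻¹ : End Z) * End.of (c ≫ b') : End Z) = 1
      rw [← hu', Units.inv_mul]
    set t : D ⟶ Z := b' ≫ v ≫ (𝟙 Z - a) with ht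
    set σ : Z ⊞ D ⟶ Z ⊞ D := 𝟙 _ + biprod.snd ≫ t ≫ biprod.inl with hσ
    haveI : IsIso σ := by
      refine ⟨𝟙 _ - biprod.snd ≫ t ≫ biprod.inl, ?_, ?_⟩ <;>
      · simp only [hσ, Preadditive.add_comp, Preadditive.comp_add, Preadditive.comp_sub,
          Preadditive.sub_comp, Category.id_comp, Category.comp_id, Category.assoc,
          biprod.inl_snd_assoc, zero_comp, comp_zero]
        abel
    set ψ : Z ⊞ C ≅ Z ⊞ D := φ ≪≫ asIso σ with hψ
    have new_a : biprod.inl ≫ ψ.hom ≫ biprod.fst = 𝟙 Z := by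
      have hct : c ≫ t = 𝟙 Z - a := by
        rw [ht, ← Category.assoc, ← Category.assoc, Category.assoc c b' v, ← Category.assoc c,
          hv1, Category.id_comp]
      have h3 : biprod.inl ≫ ψ.hom ≫ biprod.fst = a + c ≫ t := by
        simp only [hψ, Iso.trans_hom, asIso_hom, hσ, Preadditive.comp_add,
          Preadditive.add_comp, Category.assoc, Category.comp_id, biprod.inl_fst,
          Category.id_comp]
        rw [ha, hc]
        simp
      rw [h3, hct]
      abel
    haveI : IsIso (biprod.inl ≫ ψ.hom ≫ biprod.fst) := by
      rw [new_a]; infer_instance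
    exact ⟨Biprod.isoElim ψ⟩

/-- Biproduct over a `Unique` index type. -/
noncomputable def KS.biproductUnique {ι : Type} [Fintype ι] [Unique ι] (f : ι → A) :
    (⨁ f) ≅ f default where
  hom := biproduct.π f default
  inv := biproduct.ι f default
  hom_inv_id := by
    have h := biproduct.total (f := f)
    rwa [Fintype.sum_unique] at h
  inv_hom_id := by simp

/-- Splitting a biproduct along a predicate. -/
noncomputable def KS.split {ι : Type} [Fintype ι] (f : ι → A) (p : ι → Prop) [DecidablePred p] :
    (⨁ f) ≅ (⨁ Subtype.restrict p f) ⊞ (⨁ Subtype.restrict (fun i => ¬ p i) f) where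
  hom := biprod.lift (biproduct.toSubtype f p) (biproduct.toSubtype f _)
  inv := biprod.desc (biproduct.fromSubtype f p) (biproduct.fromSubtype f _)
  hom_inv_id := by
    rw [biprod.lift_desc, biproduct.toSubtype_fromSubtype, biproduct.toSubtype_fromSubtype]
    ext j
    by_cases h : p j <;> simp [h]
  inv_hom_id := by
    apply biprod.hom_ext' <;> apply biprod.hom_ext
    · simp
    · apply biproduct.hom_ext'
      intro j
      apply biproduct.hom_ext
      intro j'
      simp only [Category.assoc, biprod.inl_desc_assoc, biprod.lift_snd,
        biproduct.ι_fromSubtype_assoc, biproduct.ι_toSubtype_assoc, Category.comp_id,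
        comp_zero, zero_comp]
      erw [Category.assoc, biproduct.toSubtype_π,
        biproduct.ι_π_ne _ (fun (h : (j : ι) = j') => j'.2 (h ▸ j.2))]
      simp
      rfl
    · apply biproduct.hom_ext'
      intro j
      apply biproduct.hom_ext
      intro j'
      simp only [Category.assoc, biprod.inr_desc_assoc, biprod.lift_fst,
        biproduct.ι_fromSubtype_assoc, biproduct.ι_toSubtype_assoc, Category.comp_id,
        comp_zero, zero_comp]
      erw [Category.assoc, biproduct.toSubtype_π,
        biproduct.ι_π_ne _ (fun (h : (j : ι) = j') => j.2 (h ▸ j'.2))]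
      simp
      rfl
    · simp

lemma KS.exists_summand_iso {ι : Type} [Fintype ι] (Xs : ι → A)
    (hXs : ∀ i, IsLocalRing (End (Xs i))) {Z X : A} (hZ : IsLocalRing (End Z))
    (α : X ≅ ⨁ Xs) (s : Z ⟶ X) (r : X ⟶ Z) (hsr : s ≫ r = 𝟙 Z) :
    ∃ i, Nonempty (Z ≅ Xs i) := by
  haveI := hZ
  have key : ∑ i : ι, (s ≫ α.hom ≫ biproduct.π Xs i) ≫ (biproduct.ι Xs i ≫ α.inv ≫ r) = 𝟙 Z := by
    calc ∑ i : ι, (s ≫ α.hom ≫ biproduct.π Xs i) ≫ (biproduct.ι Xs i ≫ α.inv ≫ r)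
        = s ≫ α.hom ≫ (∑ i : ι, biproduct.π Xs i ≫ biproduct.ι Xs i) ≫ α.inv ≫ r := by
          simp only [Preadditive.sum_comp, Preadditive.comp_sum, Category.assoc]
    _ = 𝟙 Z := by rw [biproduct.total]; simp [hsr]
  have hsum : IsUnit (∑ i ∈ Finset.univ,
      (fun i => End.of ((s ≫ α.hom ≫ biproduct.π Xs i) ≫ (biproduct.ι Xs i ≫ α.inv ≫ r))) i) := by
    have h2 : (∑ i ∈ Finset.univ,
        (fun i => End.of ((s ≫ α.hom ≫ biproduct.π Xs i) ≫ (biproduct.ι Xs i ≫ α.inv ≫ r))) i)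
        = End.of (𝟙 Z) := by
      show (∑ i : ι, (s ≫ α.hom ≫ biproduct.π Xs i) ≫ (biproduct.ι Xs i ≫ α.inv ≫ r) : Z ⟶ Z)
        = 𝟙 Z
      exact key
    rw [h2]
    exact isUnit_one
  obtain ⟨i, _, hi⟩ := KS.exists_isUnit_of_sum Finset.univ _ hsum
  have := KS.isIso_of_comp_isUnit hZ (hXs i) (s ≫ α.hom ≫ biproduct.π Xs i)
    (biproduct.ι Xs i ≫ α.inv ≫ r) hi
  exact ⟨i, ⟨asIso (s ≫ α.hom ≫ biproduct.π Xs i)⟩⟩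
end CatLemmas

noncomputable section Main
variable {A : Type u} [Category.{v} A] [Preadditive A] [HasFiniteBiproducts A]
attribute [local instance] CategoryTheory.Limits.hasBinaryBiproducts_of_finite_biproducts

/-- In a biproduct decomposition, a zero right factor can be dropped. -/
def KS.biprodIsoZeroRight {P Q : A} (h : IsZero Q) : P ⊞ Q ≅ P where
  hom := biprod.fst
  inv := biprod.inl
  hom_inv_id := by
    have h2 : (biprod.snd ≫ biprod.inr : P ⊞ Q ⟶ P ⊞ Q) = 0 := by
      rw [h.eq_of_tgt biprod.snd 0, zero_comp]
    rw [← biprod.total, h2, add_zero]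
  inv_hom_id := by simp

lemma KS.localEnd (hKS : IsKrullSchmidtCategory A) {X : A} (hX : Indecomposable X) :
    IsLocalRing (End X) := by
  classical
  obtain ⟨n, f, ⟨⟨α⟩, hloc⟩⟩ := hKS X
  cases n with
  | zero =>
    exfalso
    apply hX.1
    have hz : IsZero (⨁ f) := by
      rw [IsZero.iff_id_eq_zero, ← biproduct.total]
      simp
    exact hz.of_iso α
  | succ m =>
    set p : Fin (m + 1) → Prop := fun i => i = 0 with hp
    have hdec := hX.2 _ _ (α ≪≫ KS.split f p)
    letI huniq1 : Unique {i : Fin (m + 1) // p i} :=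
      ⟨⟨⟨0, rfl⟩⟩, by rintro ⟨x, hx⟩; simp only [hp] at hx; subst hx; rfl⟩
    rcases hdec with hz | hz
    · exfalso
      have hz0 : IsZero (f 0) := KS.isZero_of_retract hz
        (biproduct.ι (Subtype.restrict p f) (⟨0, rfl⟩ : {i // p i}))
        (biproduct.π (Subtype.restrict p f) ⟨0, rfl⟩)
        (biproduct.ι_π_self (Subtype.restrict p f) ⟨0, rfl⟩)
      exact KS.not_isZero_of_local (hloc 0) hz0
    · haveI hempty : IsEmpty {i : Fin (m + 1) // ¬ p i} := by
        by_contra hne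
        rw [not_isEmpty_iff] at hne
        obtain ⟨j⟩ := hne
        have hzj : IsZero (f j.1) := KS.isZero_of_retract hz
          (biproduct.ι (Subtype.restrict (fun i => ¬ p i) f) j)
          (biproduct.π (Subtype.restrict (fun i => ¬ p i) f) j)
          (biproduct.ι_π_self (Subtype.restrict (fun i => ¬ p i) f) j)
        exact KS.not_isZero_of_local (hloc j.1) hzj
      have hz2 : IsZero (⨁ Subtype.restrict (fun i => ¬ p i) f) := by
        rw [IsZero.iff_id_eq_zero, ← biproduct.total]
        simp
      have ι1 : X ≅ f 0 :=
        α ≪≫ KS.split f p ≪≫ KS.biprodIsoZeroRight hz2 ≪≫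
          KS.biproductUnique (Subtype.restrict p f)
      exact KS.isLocalRing_transfer (KS.endRingEquiv ι1.symm) (hloc 0)

lemma KS.exchange_aux (m : ℕ) :
    ∀ (κ : Type) [Fintype κ] (Ys : κ → A), Fintype.card κ = m →
      (∀ j, IsLocalRing (End (Ys j))) →
      ∀ (ι : Type) [Fintype ι] [DecidableEq ι] (Xs : ι → A),
        (∀ i, IsLocalRing (End (Xs i))) →
        ∀ (X X' : A), (X ≅ ⨁ Xs) → (X ≅ X' ⊞ ⨁ Ys) →
          ∃ I : Finset ι,
            Nonempty (((⨁ fun i : I => Xs i.1) ⊞ X') ≅ X) ∧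
            Nonempty ((⨁ fun i : I => Xs i.1) ≅ ⨁ Ys) := by
  induction m with
  | zero =>
    intro κ _ Ys hcard hYs ι _ _ Xs hXs X X' α β
    haveI : IsEmpty κ := Fintype.card_eq_zero_iff.mp hcard
    have hzY : IsZero (⨁ Ys) := by
      rw [IsZero.iff_id_eq_zero, ← biproduct.total]
      simp
    refine ⟨(∅ : Finset ι), ?_, ?_⟩
    · haveI : IsEmpty ((∅ : Finset ι) : Type) :=
        ⟨fun x => (Finset.notMem_empty x.1 x.2)⟩
      have hzI : IsZero (⨁ fun i : (∅ : Finset ι) => Xs i.1) := by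
        rw [IsZero.iff_id_eq_zero, ← biproduct.total]
        simp
      exact ⟨biprod.braiding _ _ ≪≫ biprod.mapIso (Iso.refl X') (hzI.iso hzY) ≪≫ β.symm⟩
    · haveI : IsEmpty ((∅ : Finset ι) : Type) :=
        ⟨fun x => (Finset.notMem_empty x.1 x.2)⟩
      have hzI : IsZero (⨁ fun i : (∅ : Finset ι) => Xs i.1) := by
        rw [IsZero.iff_id_eq_zero, ← biproduct.total]
        simp
      exact ⟨hzI.iso hzY⟩
  | succ m ih =>
    intro κ _ Ys hcard hYs ι _ _ Xs hXs X X' α β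
    classical
    obtain ⟨j₀⟩ : Nonempty κ := Fintype.card_pos_iff.mp (by omega)
    set p : κ → Prop := fun j => j = j₀ with hp
    letI : Unique {j : κ // p j} :=
      ⟨⟨⟨j₀, rfl⟩⟩, by rintro ⟨x, hx⟩; simp only [hp] at hx; subst hx; rfl⟩
    set W := ⨁ Subtype.restrict (fun j => ¬ p j) Ys with hW
    have τ' : (⨁ Ys) ≅ Ys j₀ ⊞ W :=
      KS.split Ys p ≪≫
        biprod.mapIso (KS.biproductUnique (Subtype.restrict p Ys)) (Iso.refl W)
    have γ : X ≅ Ys j₀ ⊞ (X' ⊞ W) :=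
      β ≪≫ biprod.mapIso (Iso.refl X') τ' ≪≫ (biprod.associator X' (Ys j₀) W).symm ≪≫
        biprod.mapIso (biprod.braiding X' (Ys j₀)) (Iso.refl W) ≪≫
        biprod.associator (Ys j₀) X' W
    obtain ⟨i₀, ⟨e⟩⟩ := KS.exists_summand_iso Xs hXs (hYs j₀) α
      (biprod.inl ≫ γ.inv) (γ.hom ≫ biprod.fst) (by simp)
    set q : ι → Prop := fun i => i = i₀ with hq
    letI : Unique {i : ι // q i} :=
      ⟨⟨⟨i₀, rfl⟩⟩, by rintro ⟨x, hx⟩; simp only [hq] at hx; subst hx; rfl⟩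
    set V := ⨁ Subtype.restrict (fun i => ¬ q i) Xs with hV
    have δ : X ≅ Xs i₀ ⊞ V :=
      α ≪≫ KS.split Xs q ≪≫
        biprod.mapIso (KS.biproductUnique (Subtype.restrict q Xs)) (Iso.refl V)
    have φ : Xs i₀ ⊞ (X' ⊞ W) ≅ Xs i₀ ⊞ V :=
      (biprod.mapIso e (Iso.refl (X' ⊞ W))).symm ≪≫ γ.symm ≪≫ δ
    obtain ⟨ν⟩ := KS.cancel (hXs i₀) φ
    -- recursion
    have hcard' : Fintype.card {j : κ // ¬ p j} = m := by
      have h1 : Fintype.card {j : κ // p j} = 1 := by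
        simp [hp, Fintype.card_subtype_eq]
      have h2 := Fintype.card_subtype_compl p
      omega
    obtain ⟨I', ⟨A1⟩, ⟨A2⟩⟩ := ih {j : κ // ¬ p j} (Subtype.restrict (fun j => ¬ p j) Ys)
      hcard' (fun j => hYs j.1) {i : ι // ¬ q i} (Subtype.restrict (fun i => ¬ q i) Xs)
      (fun i => hXs i.1) V X' (Iso.refl V) ν.symm
    set J : Finset ι := I'.map ⟨Subtype.val, Subtype.val_injective⟩ with hJ
    have hni : i₀ ∉ J := by
      intro hmem
      rw [hJ, Finset.mem_map] at hmem
      obtain ⟨a, _, ha⟩ := hmem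
      exact a.2 ha
    let I : Finset ι := insert i₀ J
    letI : Unique {x : (I : Type) // (x.1 : ι) = i₀} :=
      ⟨⟨⟨⟨i₀, Finset.mem_insert_self i₀ J⟩, rfl⟩⟩, by
        intro a
        apply Subtype.ext
        apply Subtype.ext
        exact a.2⟩
    let E : {x : (I : Type) // ¬ (x.1 : ι) = i₀} ≃ (I' : Type) :=
      { toFun := fun x => ⟨⟨x.1.1, x.2⟩, by
          rcases Finset.mem_insert.mp x.1.2 with h | h
          · exact absurd h x.2
          · obtain ⟨⟨av, ap⟩, haI, ha⟩ := Finset.mem_map.mp h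
            have ha' : av = (x.1.1 : ι) := ha
            subst ha'
            exact haI⟩
        invFun := fun j => ⟨⟨j.1.1, Finset.mem_insert_of_mem (Finset.mem_map_of_mem _ j.2)⟩,
          j.1.2⟩
        left_inv := fun x => by apply Subtype.ext; apply Subtype.ext; rfl
        right_inv := fun j => by apply Subtype.ext; apply Subtype.ext; rfl }
    have Θ : (⨁ fun i : I => Xs i.1) ≅
        Xs i₀ ⊞ (⨁ fun j : I' => (Subtype.restrict (fun i => ¬ q i) Xs) j.1) :=
      KS.split (fun i : I => Xs i.1) (fun x => (x.1 : ι) = i₀) ≪≫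
        biprod.mapIso (KS.biproductUnique _)
          (biproduct.whiskerEquiv
            (f := Subtype.restrict (fun x : (I : Type) => ¬ (x.1 : ι) = i₀)
              (fun i : I => Xs i.1))
            (g := fun j : I' => (Subtype.restrict (fun i => ¬ q i) Xs) j.1)
            E (fun x => Iso.refl _))
    refine ⟨I, ?_, ?_⟩
    · exact ⟨biprod.mapIso Θ (Iso.refl X') ≪≫ biprod.associator _ _ _ ≪≫
        biprod.mapIso (Iso.refl (Xs i₀)) A1 ≪≫ δ.symm⟩
    · exact ⟨Θ ≪≫ biprod.mapIso e.symm A2 ≪≫ τ'.symm⟩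

/-- Exchange property: let `X` be an object of a Krull-Schmidt category with two
decompositions `X₁ ⊕ … ⊕ X_n = X = X' ⊕ X''` where each `X_i` is indecomposable.  Then
there is a subset `I` of the indices (after reindexing, `I = {1, …, t}` for some
`t ≤ n`) with `X ≅ (⨁_{i ∈ I} X_i) ⊕ X'`, the summand `⨁_{i ∈ I} X_i` being isomorphic
to `X''`. -/
theorem krullSchmidt_exchange {A : Type u} [Category.{v} A] [Preadditive A]
    [HasFiniteBiproducts A] (hKS : IsKrullSchmidtCategory A)
    (X X' X'' : A) {n : ℕ} (Xs : Fin n → A)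
    (h : Nonempty (X ≅ ⨁ Xs)) (h' : Nonempty (X ≅ X' ⊞ X''))
    (hind : ∀ i, Indecomposable (Xs i)) :
    ∃ I : Finset (Fin n),
      Nonempty (((⨁ fun i : I => Xs i) ⊞ X') ≅ X) ∧
      Nonempty ((⨁ fun i : I => Xs i) ≅ X'') := by
  classical
  obtain ⟨α⟩ := h
  obtain ⟨β₀⟩ := h'
  have hXs : ∀ i, IsLocalRing (End (Xs i)) := fun i => KS.localEnd hKS (hind i)
  obtain ⟨m, Ys, ⟨⟨ψ⟩, hYs⟩⟩ := hKS X''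
  obtain ⟨I, ⟨B1⟩, ⟨B2⟩⟩ := KS.exchange_aux m (Fin m) Ys (Fintype.card_fin m) hYs
    (Fin n) Xs hXs X X' α (β₀ ≪≫ biprod.mapIso (Iso.refl X') ψ)
  exact ⟨I, ⟨B1⟩, ⟨B2 ≪≫ ψ.symm⟩⟩

end Main
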